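/- Hall's theorem for relations: if G * R = H and R ⊆ V_G × V_H satisfies the Hall condition (|S| ≤ |R(S)| for every S ⊆ V_G), then R contains a monomorphism (an injective graph homomorphism) f : G → H. -/

import Mathlib

/-- Hall's theorem for relations: if `G * R = H` and `R` satisfies the Hall condition
(`|S| ≤ |R(S)|` for every set `S` of vertices of `G`), then `R` contains a
monomorphism (injective homomorphism) `f : G → W`. -/
theorem stmt_9 {V W : Type*} [Fintype V] [Fintype W]
    (E : V → V → Prop) (F : W → W → Prop) (R : V → W → Prop)
    (hdom : ∀ v, ∃ w, R v w) (himg : ∀ w, ∃ v, R v w)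
    (hstar : ∀ a b, F a b ↔ ∃ u v, E u v ∧ R u a ∧ R v b)    -- G * R = H
    (hall : ∀ S : Finset V, S.card ≤ Set.ncard {w | ∃ x ∈ S, R x w}) :
    ∃ f : V → W, Function.Injective f ∧ (∀ v, R v (f v)) ∧
      ∀ u v, E u v → F (f u) (f v) := by
  classical
  obtain ⟨f, hinj, hf⟩ :=
    (Fintype.all_card_le_rel_image_card_iff_exists_injective {p : V × W | R p.1 p.2}).mp (by
      intro A
      refine (hall A).trans_eq ?_
      have : {w | ∃ x ∈ A, R x w} = SetRel.image {p : V × W | R p.1 p.2} ↑A := by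
        ext w; simp [SetRel.image]
      rw [this, Set.ncard_eq_toFinset_card', Set.toFinset_card]
      )
  exact ⟨f, hinj, hf, fun u v huv => (hstar _ _).mpr ⟨u, v, huv, hf u, hf v⟩⟩
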